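/- arXiv:1307.5459 — 7 statements merged into one kernel-verified Lean document; each statement's English description precedes it below -/
import Mathlib

section
/- For any Π : Matrix (Fin m) (Fin n) ℝ, the multiset of eigenvalues of the real symmetric matrix F(Π)ᵀ * F(Π) equals the multiset {‖Π_i‖₂² : i ∈ Fin n}, where ‖Π_i‖₂ is the Euclidean norm of the i-th column of Π. Consequently, the sum of the singular values of F(Π) (the nuclear norm ‖F(Π)‖_*) equals Σ_{i} ‖Π_i‖₂. -/
open Matrix

/-- The block-diagonal matrix `F(Π)` whose `i`-th diagonal block is the `i`-th column of `Π`. -/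
def Fmap {m n : ℕ} (P : Matrix (Fin m) (Fin n) ℝ) : Matrix (Fin n × Fin m) (Fin n) ℝ :=
  fun p i => if p.1 = i then P p.2 i else 0

open Polynomial in
lemma charpoly_unitary_conj {N : Type*} [Fintype N] [DecidableEq N]
    (U D : Matrix N N ℝ) (hU : U ∈ Matrix.unitaryGroup N ℝ) :
    (U * D * star U).charpoly = D.charpoly := by
  have h1 : U * star U = 1 := (Matrix.mem_unitaryGroup_iff).mp hU
  have h2 : star U * U = 1 := (Matrix.mem_unitaryGroup_iff').mp hU
  have hmap : (C : ℝ →+* ℝ[X]).mapMatrix U * (C : ℝ →+* ℝ[X]).mapMatrix (star U) = 1 := by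
    rw [← _root_.map_mul, h1, _root_.map_one]
  have hmap' : (C : ℝ →+* ℝ[X]).mapMatrix (star U) * (C : ℝ →+* ℝ[X]).mapMatrix U = 1 := by
    rw [← _root_.map_mul, h2, _root_.map_one]
  have hscalar : Matrix.scalar N (X : ℝ[X]) = (X : ℝ[X]) • (1 : Matrix N N ℝ[X]) := by
    rw [Matrix.smul_one_eq_diagonal]; rfl
  have hc : charmatrix (U * D * star U) =
      (C : ℝ →+* ℝ[X]).mapMatrix U * charmatrix D * (C : ℝ →+* ℝ[X]).mapMatrix (star U) := by
    unfold charmatrix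
    rw [_root_.map_mul, _root_.map_mul, Matrix.mul_sub, Matrix.sub_mul]
    congr 1
    rw [hscalar, Matrix.mul_smul, Matrix.mul_one, Matrix.smul_mul, hmap]
  have := congrArg Matrix.det hc
  rw [Matrix.charpoly, Matrix.charpoly, this, Matrix.det_mul, Matrix.det_mul,
    mul_comm, ← mul_assoc, ← Matrix.det_mul, hmap']
  simp

open Polynomial in
lemma charpoly_diagonal_real {N : Type*} [Fintype N] [DecidableEq N] (g : N → ℝ) :
    (Matrix.diagonal g).charpoly = ∏ i, ((X : ℝ[X]) - C (g i)) := by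
  have hcm : Matrix.charmatrix (Matrix.diagonal g)
      = Matrix.diagonal (fun i => (X : ℝ[X]) - C (g i)) := by
    ext i i'
    by_cases h : i = i'
    · subst h; simp
    · simp [Matrix.charmatrix_apply_ne _ _ _ h, Matrix.diagonal_apply_ne _ h, h]
  rw [Matrix.charpoly, hcm, Matrix.det_diagonal]

theorem stmt_3 (m n : ℕ) (P : Matrix (Fin m) (Fin n) ℝ)
    (hH : ((Fmap P)ᵀ * Fmap P).IsHermitian) :
    Finset.univ.val.map hH.eigenvalues
        = Finset.univ.val.map (fun i : Fin n => Real.sqrt (∑ j, (P j i) ^ 2) ^ 2) ∧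
    ∑ i, Real.sqrt (hH.eigenvalues i) = ∑ i : Fin n, Real.sqrt (∑ j, (P j i) ^ 2) := by
  classical
  set d : Fin n → ℝ := fun i => ∑ j, (P j i) ^ 2 with hd
  have hdiag : (Fmap P)ᵀ * Fmap P = Matrix.diagonal d := by
    ext i i'
    simp only [Matrix.mul_apply, Matrix.transpose_apply, Fmap, Matrix.diagonal_apply]
    rw [Fintype.sum_prod_type]
    by_cases h : i = i'
    · subst h
      simp [hd, sq]
    · simp only [if_neg h]
      rw [Finset.sum_eq_zero]
      intro k _
      rw [Finset.sum_eq_zero]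
      intro j _
      by_cases hk : k = i
      · simp [hk, Ne.symm, h]
      · simp [hk]
  have hd0 : ∀ i, 0 ≤ d i := fun i => Finset.sum_nonneg fun j _ => sq_nonneg _
  have hsq : (fun i : Fin n => Real.sqrt (∑ j, (P j i) ^ 2) ^ 2) = d := by
    funext i
    exact Real.sq_sqrt (hd0 i)
  have hcp1 : ((Fmap P)ᵀ * Fmap P).charpoly
      = ∏ i, ((Polynomial.X : Polynomial ℝ) - Polynomial.C (d i)) := by
    rw [hdiag, charpoly_diagonal_real]
  have hE : Matrix.diagonal ((RCLike.ofReal : ℝ → ℝ) ∘ hH.eigenvalues)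
      = Matrix.diagonal hH.eigenvalues := by
    congr 1
  have hcp2 : ((Fmap P)ᵀ * Fmap P).charpoly
      = ∏ i, ((Polynomial.X : Polynomial ℝ) - Polynomial.C (hH.eigenvalues i)) := by
    conv_lhs => rw [hH.spectral_theorem]
    rw [hE, Unitary.conjStarAlgAut_apply, charpoly_unitary_conj _ _ (hH.eigenvectorUnitary).2, charpoly_diagonal_real]
  -- convert finset products to multiset products and take roots
  have key : Finset.univ.val.map hH.eigenvalues = Finset.univ.val.map d := by
    have h1 : ((Finset.univ.val.map hH.eigenvalues).map
        (fun a => (Polynomial.X : Polynomial ℝ) - Polynomial.C a)).prod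
        = ((Finset.univ.val.map d).map
        (fun a => (Polynomial.X : Polynomial ℝ) - Polynomial.C a)).prod := by
      rw [Multiset.map_map, Multiset.map_map]
      exact (hcp2.symm.trans hcp1 :)
    have := congrArg Polynomial.roots h1
    rwa [Polynomial.roots_multiset_prod_X_sub_C, Polynomial.roots_multiset_prod_X_sub_C] at this
  constructor
  · rw [hsq]; exact key
  · have h2 := congrArg (fun s : Multiset ℝ => (s.map Real.sqrt).sum) key
    simp only [Multiset.map_map] at h2
    exact h2
end

section
/- Let p₀ : Fin m → ℝ be nonzero with nonnegative entries, and define φ(Π) = (1 / ‖p₀‖₂) · Σ_{i ∈ Fin n} ‖Π_i‖₂ for Π : Matrix (Fin m) (Fin n) ℝ. Then φ is a convex function on the space of m × n real matrices, and for every Π in the feasible set S(p₀) = {Π : Π j i ≥ 0 for all j, i, and Σ_i Π j i = p₀ j for all j}, one has φ(Π) ≤ rank(F(Π)). -/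
open Matrix

/-- The `i`-th column of a matrix, as a linear map into Euclidean space. -/
def colL (m n : ℕ) (i : Fin n) :
    Matrix (Fin m) (Fin n) ℝ →ₗ[ℝ] EuclideanSpace ℝ (Fin m) where
  toFun P := WithLp.toLp 2 (fun j => P j i)
  map_add' A B := rfl
  map_smul' c A := rfl

lemma myConvexOn_sum {ι E : Type*} [AddCommGroup E] [Module ℝ E] (t : Finset ι)
    (f : ι → E → ℝ) (hf : ∀ i ∈ t, ConvexOn ℝ Set.univ (f i)) :
    ConvexOn ℝ Set.univ (fun x => ∑ i ∈ t, f i x) := by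
  classical
  induction t using Finset.induction with
  | empty => simpa using convexOn_const (0:ℝ) convex_univ
  | insert _ _ hnot ih =>
      rename_i a t'
      simp only [Finset.sum_insert hnot]
      exact (hf a (Finset.mem_insert_self a t')).add
        (ih fun i hi => hf i (Finset.mem_insert_of_mem hi))

theorem stmt_6 (m n : ℕ) (p₀ : Fin m → ℝ) (hp₀ : ∀ j, 0 ≤ p₀ j) (hp₀ne : p₀ ≠ 0)
    (φ : Matrix (Fin m) (Fin n) ℝ → ℝ)
    (hφ : φ = fun P => (1 / Real.sqrt (∑ j, (p₀ j) ^ 2)) *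
      ∑ i : Fin n, Real.sqrt (∑ j, (P j i) ^ 2)) :
    ConvexOn ℝ Set.univ φ ∧
    ∀ P : Matrix (Fin m) (Fin n) ℝ, (∀ j i, 0 ≤ P j i) → (∀ j, ∑ i, P j i = p₀ j) →
      φ P ≤ ((Fmap P).rank : ℝ) := by
  classical
  constructor
  · -- convexity
    subst hφ
    have h1 : ∀ i : Fin n, ConvexOn ℝ (Set.univ : Set (Matrix (Fin m) (Fin n) ℝ))
        (fun P => Real.sqrt (∑ j, (P j i) ^ 2)) := by
      intro i
      have heq : (fun P : Matrix (Fin m) (Fin n) ℝ => Real.sqrt (∑ j, (P j i) ^ 2))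
          = fun P => ‖colL m n i P‖ := by
        funext P
        rw [EuclideanSpace.norm_eq]
        congr 1
        refine Finset.sum_congr rfl fun j _ => ?_
        rw [Real.norm_eq_abs, sq_abs]
        rfl
      rw [heq]
      have := (convexOn_norm (convex_univ :
          Convex ℝ (Set.univ : Set (EuclideanSpace ℝ (Fin m))))).comp_affineMap
          (colL m n i).toAffineMap
      exact this
    have h2 : ConvexOn ℝ (Set.univ : Set (Matrix (Fin m) (Fin n) ℝ))
        (fun P => ∑ i : Fin n, Real.sqrt (∑ j, (P j i) ^ 2)) := by
      exact myConvexOn_sum Finset.univ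
        (fun i (P : Matrix (Fin m) (Fin n) ℝ) => Real.sqrt (∑ j, (P j i) ^ 2))
        (fun i _ => h1 i)
    have hc0 : (0:ℝ) ≤ 1 / Real.sqrt (∑ j, (p₀ j) ^ 2) := by positivity
    have h3 := h2.smul hc0
    simpa [smul_eq_mul] using h3
  · -- the rank bound
    intro P hP hrow
    set c := Real.sqrt (∑ j, p₀ j ^ 2) with hc_def
    obtain ⟨j₀, hj₀⟩ : ∃ j, p₀ j ≠ 0 := by
      by_contra h; push_neg at h; exact hp₀ne (funext h)
    have hsumpos : 0 < ∑ j, p₀ j ^ 2 :=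
      Finset.sum_pos' (fun j _ => sq_nonneg _)
        ⟨j₀, Finset.mem_univ _, by positivity⟩
    have hc : 0 < c := Real.sqrt_pos.mpr hsumpos
    set s : Finset (Fin n) := Finset.univ.filter (fun i => ∃ j, P j i ≠ 0) with hs_def
    have hterm : ∀ i : Fin n, Real.sqrt (∑ j, (P j i) ^ 2) ≤ c := by
      intro i
      apply Real.sqrt_le_sqrt
      apply Finset.sum_le_sum
      intro j _
      have h1 : P j i ≤ p₀ j := by
        rw [← hrow j]
        exact Finset.single_le_sum (fun i' _ => hP j i') (Finset.mem_univ i)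
      exact pow_le_pow_left₀ (hP j i) h1 2
    have hzero : ∀ i ∈ Finset.univ, i ∉ s → Real.sqrt (∑ j, (P j i) ^ 2) = 0 := by
      intro i _ hi
      simp only [hs_def, Finset.mem_filter, Finset.mem_univ, true_and, not_exists,
        not_not] at hi
      simp [hi]
    have hsum_le : ∑ i : Fin n, Real.sqrt (∑ j, (P j i) ^ 2) ≤ s.card * c := by
      rw [← Finset.sum_subset (Finset.subset_univ s) hzero]
      calc ∑ i ∈ s, Real.sqrt (∑ j, (P j i) ^ 2) ≤ ∑ _i ∈ s, c :=
            Finset.sum_le_sum fun i _ => hterm i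
        _ = s.card * c := by rw [Finset.sum_const, nsmul_eq_mul]
    have hφle : φ P ≤ (s.card : ℝ) := by
      rw [hφ]
      calc (1 / c) * ∑ i : Fin n, Real.sqrt (∑ j, (P j i) ^ 2)
          ≤ (1 / c) * (s.card * c) := by
            exact mul_le_mul_of_nonneg_left hsum_le (by positivity)
        _ = (s.card : ℝ) := by field_simp
    refine hφle.trans ?_
    have hrank : s.card ≤ (Fmap P).rank := by
      have hW : ∀ i : Fin n, (fun p => Fmap P p i) ∈ LinearMap.range (Fmap P).mulVecLin := by
        intro i
        refine ⟨Pi.single i 1, ?_⟩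
        funext p
        simp [Matrix.mulVecLin_apply, Matrix.mulVec_single]
      set W := LinearMap.range (Fmap P).mulVecLin with hW_def
      have hli : LinearIndependent ℝ
          (fun i : ↥s => (⟨fun p => Fmap P p i.1, hW i.1⟩ : W)) := by
        apply LinearIndependent.of_comp W.subtype
        rw [Fintype.linearIndependent_iff]
        intro g hg i
        obtain ⟨j, hj⟩ : ∃ j, P j i.1 ≠ 0 := by
          have hi := i.2
          simp only [hs_def, Finset.mem_filter, Finset.mem_univ, true_and] at hi
          exact hi
        have hfun := congrFun hg (i.1, j)
        simp only [Function.comp, Submodule.coe_subtype, Finset.sum_apply,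
          Pi.smul_apply, smul_eq_mul, Pi.zero_apply] at hfun
        rw [Finset.sum_eq_single i] at hfun
        · simp only [Fmap, if_pos rfl] at hfun
          rcases mul_eq_zero.mp hfun with h | h
          · exact h
          · exact absurd h hj
        · intro b _ hb
          have hb1 : i.1 ≠ b.1 := fun h => hb (Subtype.ext h.symm)
          simp [Fmap, hb1]
        · intro h; exact absurd (Finset.mem_univ i) h
      have hcard := hli.fintype_card_le_finrank
      simpa [Fintype.card_coe, Matrix.rank] using hcard
    exact_mod_cast hrank
end

section
/- Let p₀ : Fin m → ℝ and let Π : Matrix (Fin m) (Fin n) ℝ satisfy Π j i ≥ 0 for all j, i and Σ_i Π j i = p₀ j for all j. Then the minimum of Σ_{i} y i over all y : Fin n → ℝ with y i ∈ {0, 1} for all i and Π j i ≤ p₀ j * y i for all j, i, equals card(Πᵀ𝟙), the number of nonzero column sums of Π; the minimum is attained by the indicator vector of the nonzero columns of Π. -/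
open Classical in
theorem stmt_8 (m n : ℕ) (p₀ : Fin m → ℝ) (P : Matrix (Fin m) (Fin n) ℝ)
    (hP : ∀ j i, 0 ≤ P j i) (hrow : ∀ j, ∑ i, P j i = p₀ j) :
    IsLeast {s : ℝ | ∃ y : Fin n → ℝ, (∀ i, y i = 0 ∨ y i = 1) ∧
        (∀ j i, P j i ≤ p₀ j * y i) ∧ s = ∑ i, y i}
      ((Finset.univ.filter (fun i : Fin n => ∑ j, P j i ≠ 0)).card : ℝ) ∧
    ((∀ j i, P j i ≤ p₀ j * (if (fun j' => P j' i) ≠ 0 then (1 : ℝ) else 0)) ∧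
      (∑ i : Fin n, (if (fun j' => P j' i) ≠ 0 then (1 : ℝ) else 0))
        = ((Finset.univ.filter (fun i : Fin n => ∑ j, P j i ≠ 0)).card : ℝ)) := by
  have hcol : ∀ i : Fin n, ((fun j' => P j' i) ≠ 0) ↔ (∑ j, P j i ≠ 0) := by
    intro i
    constructor
    · intro h hs
      apply h
      funext j
      exact (Finset.sum_eq_zero_iff_of_nonneg (fun j _ => hP j i)).mp hs j (Finset.mem_univ j)
    · intro h hf
      exact h (Finset.sum_eq_zero (fun j _ => congrFun hf j))
  have hle : ∀ j i, P j i ≤ p₀ j := fun j i =>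
    hrow j ▸ Finset.single_le_sum (fun i _ => hP j i) (Finset.mem_univ i)
  have hcon : ∀ j i, P j i ≤ p₀ j * (if (fun j' => P j' i) ≠ 0 then (1 : ℝ) else 0) := by
    intro j i
    by_cases h : (fun j' => P j' i) ≠ 0
    · simp [h, hle j i]
    · simp only [h, if_neg, mul_zero, if_false]
      push_neg at h
      simpa using (congrFun h j).le
  have hsum : (∑ i : Fin n, (if (fun j' => P j' i) ≠ 0 then (1 : ℝ) else 0))
      = ((Finset.univ.filter (fun i : Fin n => ∑ j, P j i ≠ 0)).card : ℝ) := by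
    rw [Finset.sum_congr rfl (fun i _ => by rw [if_congr (hcol i) rfl rfl]),
      Finset.sum_boole]
  refine ⟨⟨⟨fun i => if (fun j' => P j' i) ≠ 0 then (1 : ℝ) else 0, ?_, hcon, hsum.symm⟩, ?_⟩,
    hcon, hsum⟩
  · intro i; by_cases h : (fun j' => P j' i) ≠ 0 <;> simp [h]
  · rintro s ⟨y, hy01, hycon, rfl⟩
    have hy1 : ∀ i ∈ Finset.univ.filter (fun i : Fin n => ∑ j, P j i ≠ 0), y i = 1 := by
      intro i hi
      rcases hy01 i with h0 | h1
      · exfalso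
        rw [Finset.mem_filter] at hi
        apply hi.2
        apply Finset.sum_eq_zero
        intro j _
        have := hycon j i
        rw [h0, mul_zero] at this
        exact le_antisymm this (hP j i)
      · exact h1
    calc ((Finset.univ.filter (fun i : Fin n => ∑ j, P j i ≠ 0)).card : ℝ)
        = ∑ i ∈ Finset.univ.filter (fun i : Fin n => ∑ j, P j i ≠ 0), y i := by
          rw [Finset.sum_congr rfl hy1]; simp
      _ ≤ ∑ i, y i := by
          apply Finset.sum_le_sum_of_subset_of_nonneg (Finset.filter_subset _ _)
          intro i _ _
          rcases hy01 i with h | h <;> simp [h]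
end

section
/- Let p₀ : Fin m → ℝ have nonnegative entries, let C : Matrix (Fin m) (Fin n) ℝ, and let λ ≥ 0. Then the infimum over Π ∈ S(p₀) of trace(Cᵀ * Π) + λ · card(Πᵀ𝟙) equals the infimum, over all pairs (Π, y) with Π ∈ S(p₀), y : Fin n → ℝ, y i ∈ {0, 1} for all i, and Π j i ≤ p₀ j * y i for all j, i, of trace(Cᵀ * Π) + λ · Σ_i y i. -/
open Matrix

/-- The feasible set `S(p₀)`: entrywise-nonnegative matrices with row sums `p₀`. -/
def feasibleSet {m n : ℕ} (p₀ : Fin m → ℝ) : Set (Matrix (Fin m) (Fin n) ℝ) :=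
  {P | (∀ j i, 0 ≤ P j i) ∧ ∀ j, ∑ i, P j i = p₀ j}

theorem stmt_9 (m n : ℕ) (p₀ : Fin m → ℝ) (hp₀ : ∀ j, 0 ≤ p₀ j)
    (C : Matrix (Fin m) (Fin n) ℝ) (lam : ℝ) (hlam : 0 ≤ lam) :
    sInf {v : ℝ | ∃ P ∈ feasibleSet (n := n) p₀,
        v = Matrix.trace (Cᵀ * P) +
          lam * ((Finset.univ.filter (fun i : Fin n => ∑ j, P j i ≠ 0)).card : ℝ)}
      = sInf {v : ℝ | ∃ P ∈ feasibleSet (n := n) p₀, ∃ y : Fin n → ℝ,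
          (∀ i, y i = 0 ∨ y i = 1) ∧ (∀ j i, P j i ≤ p₀ j * y i) ∧
          v = Matrix.trace (Cᵀ * P) + lam * ∑ i, y i} := by
  classical
  set A : Set ℝ := {v : ℝ | ∃ P ∈ feasibleSet (n := n) p₀,
        v = Matrix.trace (Cᵀ * P) +
          lam * ((Finset.univ.filter (fun i : Fin n => ∑ j, P j i ≠ 0)).card : ℝ)} with hAdef
  set B : Set ℝ := {v : ℝ | ∃ P ∈ feasibleSet (n := n) p₀, ∃ y : Fin n → ℝ,
          (∀ i, y i = 0 ∨ y i = 1) ∧ (∀ j i, P j i ≤ p₀ j * y i) ∧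
          v = Matrix.trace (Cᵀ * P) + lam * ∑ i, y i} with hBdef
  -- entry bound
  have entry_le : ∀ P ∈ feasibleSet (n := n) p₀, ∀ j i, P j i ≤ p₀ j := by
    rintro P ⟨hpos, hsum⟩ j i
    calc P j i ≤ ∑ i', P j i' :=
      Finset.single_le_sum (f := fun i' => P j i') (fun i' _ => hpos j i') (Finset.mem_univ i)
    _ = p₀ j := hsum j
  -- trace formula
  have trace_eq : ∀ P : Matrix (Fin m) (Fin n) ℝ,
      Matrix.trace (Cᵀ * P) = ∑ i, ∑ j, C j i * P j i := by
    intro P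
    simp [Matrix.trace, Matrix.mul_apply, Matrix.diag, Matrix.transpose_apply]
  -- A ⊆ B
  have hsub : A ⊆ B := by
    rintro v ⟨P, hP, rfl⟩
    refine ⟨P, hP, fun i => if ∑ j, P j i ≠ 0 then 1 else 0, ?_, ?_, ?_⟩
    · intro i; by_cases h : ∑ j, P j i ≠ 0 <;> simp [h]
    · intro j i
      by_cases h : ∑ j', P j' i ≠ 0
      · simp only []
        rw [if_pos h, mul_one]
        exact entry_le P hP j i
      · push_neg at h
        have hz : P j i = 0 := by
          have := (Finset.sum_eq_zero_iff_of_nonneg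
            (fun j' _ => hP.1 j' i)).mp h
          exact this j (Finset.mem_univ j)
        simp only []
        rw [if_neg (not_not_intro h), mul_zero, hz]
    · congr 1
      congr 1
      rw [Finset.sum_boole]
  -- every element of B dominates an element of A
  have hdom : ∀ w ∈ B, ∃ v ∈ A, v ≤ w := by
    rintro w ⟨P, hP, y, hy01, hycon, rfl⟩
    refine ⟨_, ⟨P, hP, rfl⟩, ?_⟩
    have hy0 : ∀ i, 0 ≤ y i := by
      intro i; rcases hy01 i with h | h <;> simp [h]
    have hcard : ((Finset.univ.filter (fun i : Fin n => ∑ j, P j i ≠ 0)).card : ℝ)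
        ≤ ∑ i, y i := by
      have hy1 : ∀ i ∈ Finset.univ.filter (fun i : Fin n => ∑ j, P j i ≠ 0), y i = 1 := by
        intro i hi
        rw [Finset.mem_filter] at hi
        rcases hy01 i with h | h
        · exfalso
          apply hi.2
          refine Finset.sum_eq_zero fun j _ => le_antisymm ?_ (hP.1 j i)
          have := hycon j i
          rw [h, mul_zero] at this
          exact this
        · exact h
      calc ((Finset.univ.filter (fun i : Fin n => ∑ j, P j i ≠ 0)).card : ℝ)
          = ∑ i ∈ Finset.univ.filter (fun i : Fin n => ∑ j, P j i ≠ 0), y i := by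
            rw [Finset.sum_congr rfl hy1]; simp
        _ ≤ ∑ i, y i := Finset.sum_le_sum_of_subset_of_nonneg
            (Finset.filter_subset _ _) (fun i _ _ => hy0 i)
    exact add_le_add_right (mul_le_mul_of_nonneg_left hcard hlam) _
  -- lower bound for B
  have hbddB : BddBelow B := by
    refine ⟨-(∑ i : Fin n, ∑ j : Fin m, |C j i| * p₀ j), ?_⟩
    rintro w ⟨P, hP, y, hy01, hycon, rfl⟩
    have hy0 : ∀ i, 0 ≤ y i := by
      intro i; rcases hy01 i with h | h <;> simp [h]
    have htr : -(∑ i : Fin n, ∑ j : Fin m, |C j i| * p₀ j) ≤ Matrix.trace (Cᵀ * P) := by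
      rw [trace_eq, ← Finset.sum_neg_distrib]
      refine Finset.sum_le_sum fun i _ => ?_
      rw [← Finset.sum_neg_distrib]
      refine Finset.sum_le_sum fun j _ => ?_
      have h1 : P j i ≤ p₀ j := entry_le P hP j i
      have h2 : 0 ≤ P j i := hP.1 j i
      have h3 := neg_abs_le (C j i)
      have h4 := abs_nonneg (C j i)
      nlinarith
    have hlt : 0 ≤ lam * ∑ i, y i :=
      mul_nonneg hlam (Finset.sum_nonneg fun i _ => hy0 i)
    linarith
  have hbddA : BddBelow A := hbddB.mono hsub
  by_cases hA : A.Nonempty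
  · refine le_antisymm ?_ (csInf_le_csInf hbddB hA hsub)
    have hB : B.Nonempty := ⟨_, hsub hA.choose_spec⟩
    refine le_csInf hB fun w hw => ?_
    obtain ⟨v, hvA, hvw⟩ := hdom w hw
    exact (csInf_le hbddA hvA).trans hvw
  · have hB : ¬ B.Nonempty := by
      rintro ⟨w, hw⟩
      obtain ⟨v, hvA, -⟩ := hdom w hw
      exact hA ⟨v, hvA⟩
    rw [Set.not_nonempty_iff_eq_empty] at hA hB
    rw [hA, hB]
end

section
/- Let p₀ : Fin m → ℝ be a probability vector (nonnegative entries summing to 1), let C : Matrix (Fin m) (Fin n) ℝ, and let λ ≥ 0. Then the infimum over Π ∈ S(p₀) of trace(Cᵀ * Π) + λ / ‖Πᵀ𝟙‖_∞ is less than or equal to the infimum over Π ∈ S(p₀) of trace(Cᵀ * Π) + λ · card(Πᵀ𝟙). (Note that for Π ∈ S(p₀), the column-sum vector Πᵀ𝟙 is a probability vector, so ‖Πᵀ𝟙‖_∞ > 0.) -/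
open Matrix

theorem stmt_11 (m n : ℕ) (p₀ : Fin m → ℝ) (hp₀ : ∀ j, 0 ≤ p₀ j) (hsum : ∑ j, p₀ j = 1)
    (C : Matrix (Fin m) (Fin n) ℝ) (lam : ℝ) (hlam : 0 ≤ lam) :
    sInf {v : ℝ | ∃ P ∈ feasibleSet (n := n) p₀,
        v = Matrix.trace (Cᵀ * P) + lam / (⨆ i : Fin n, |∑ j, P j i|)}
      ≤ sInf {v : ℝ | ∃ P ∈ feasibleSet (n := n) p₀,
        v = Matrix.trace (Cᵀ * P) +
          lam * ((Finset.univ.filter (fun i : Fin n => ∑ j, P j i ≠ 0)).card : ℝ)} := by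
  set A := {v : ℝ | ∃ P ∈ feasibleSet (n := n) p₀,
        v = Matrix.trace (Cᵀ * P) + lam / (⨆ i : Fin n, |∑ j, P j i|)} with hA
  set B := {v : ℝ | ∃ P ∈ feasibleSet (n := n) p₀,
        v = Matrix.trace (Cᵀ * P) +
          lam * ((Finset.univ.filter (fun i : Fin n => ∑ j, P j i ≠ 0)).card : ℝ)} with hB
  by_cases hfe : (feasibleSet (n := n) p₀).Nonempty
  · -- trace lower bound on the feasible set
    have htrace : ∀ P ∈ feasibleSet (n := n) p₀,
        -(∑ j, ∑ i, |C j i|) ≤ Matrix.trace (Cᵀ * P) := by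
      intro P hP
      obtain ⟨hPnn, hProw⟩ := hP
      have hPle1 : ∀ j i, P j i ≤ 1 := by
        intro j i
        have h1 : P j i ≤ ∑ i', P j i' :=
          Finset.single_le_sum (fun i' _ => hPnn j i') (Finset.mem_univ i)
        have h2 : p₀ j ≤ ∑ j', p₀ j' :=
          Finset.single_le_sum (fun j' _ => hp₀ j') (Finset.mem_univ j)
        calc P j i ≤ p₀ j := by rw [← hProw j]; exact h1
          _ ≤ 1 := by rw [← hsum]; exact h2
      have : Matrix.trace (Cᵀ * P) = ∑ i, ∑ j, C j i * P j i := by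
        simp [Matrix.trace, Matrix.diag, Matrix.mul_apply, Matrix.transpose_apply]
      rw [this]
      have heq : -(∑ j, ∑ i, |C j i|) = ∑ i, ∑ j, -|C j i| := by
        rw [Finset.sum_comm]
        simp [Finset.sum_neg_distrib]
      rw [heq]
      apply Finset.sum_le_sum
      intro i _
      apply Finset.sum_le_sum
      intro j _
      have habs : -|C j i| ≤ C j i * P j i := by
        have h0 : -(|C j i| * P j i) ≤ C j i * P j i := by
          have := mul_le_mul_of_nonneg_right (neg_abs_le (C j i)) (hPnn j i)
          simpa [neg_mul] using this
        have h1 : -|C j i| ≤ -(|C j i| * P j i) := by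
          have := mul_le_mul_of_nonneg_left (hPle1 j i) (abs_nonneg (C j i))
          simpa using this
        linarith
      exact habs
    -- A is bounded below
    have hbdd : BddBelow A := by
      refine ⟨-(∑ j, ∑ i, |C j i|), ?_⟩
      rintro v ⟨P, hP, rfl⟩
      have h1 := htrace P hP
      have hsupnn : 0 ≤ ⨆ i : Fin n, |∑ j, P j i| := by
        rcases Nat.eq_zero_or_pos n with hn | hn
        · subst hn; simp [Real.iSup_of_isEmpty]
        · calc (0:ℝ) ≤ |∑ j, P j ⟨0, hn⟩| := abs_nonneg _
            _ ≤ ⨆ i : Fin n, |∑ j, P j i| :=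
              le_ciSup (f := fun i : Fin n => |∑ j, P j i|)
                (Set.Finite.bddAbove (Set.finite_range _)) ⟨0, hn⟩
      have : 0 ≤ lam / (⨆ i : Fin n, |∑ j, P j i|) := div_nonneg hlam hsupnn
      linarith
    -- B nonempty
    obtain ⟨P₀, hP₀⟩ := hfe
    have hBne : B.Nonempty := ⟨_, P₀, hP₀, rfl⟩
    apply le_csInf hBne
    rintro v ⟨P, hP, rfl⟩
    have hmemA : Matrix.trace (Cᵀ * P) + lam / (⨆ i : Fin n, |∑ j, P j i|) ∈ A :=
      ⟨P, hP, rfl⟩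
    refine le_trans (csInf_le hbdd hmemA) ?_
    -- pointwise inequality: lam / sup ≤ lam * card
    obtain ⟨hPnn, hProw⟩ := hP
    set s : Fin n → ℝ := fun i => ∑ j, P j i with hs
    have hsnn : ∀ i, 0 ≤ s i := fun i => Finset.sum_nonneg fun j _ => hPnn j i
    have hssum : ∑ i, s i = 1 := by
      rw [hs]
      rw [Finset.sum_comm]
      simp only [hProw]
      exact hsum
    set M := ⨆ i : Fin n, |s i| with hM
    have hbddM : BddAbove (Set.range fun i : Fin n => |s i|) :=
      Set.Finite.bddAbove (Set.finite_range _)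
    have hle : ∀ i, s i ≤ M := fun i =>
      le_trans (le_abs_self _) (le_ciSup hbddM i)
    have hex : ∃ i, s i ≠ 0 := by
      by_contra h
      push_neg at h
      rw [Finset.sum_congr rfl (fun i _ => h i)] at hssum
      simp at hssum
    obtain ⟨i₀, hi₀⟩ := hex
    have hMpos : 0 < M := by
      have : 0 < |s i₀| := abs_pos.mpr hi₀
      exact lt_of_lt_of_le this (le_ciSup hbddM i₀)
    set K := (Finset.univ.filter (fun i : Fin n => s i ≠ 0)) with hK
    have hcardM : 1 ≤ (K.card : ℝ) * M := by
      have h1 : ∑ i ∈ K, s i = 1 := by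
        rw [hK, Finset.sum_filter_ne_zero, hssum]
      have h2 : ∑ i ∈ K, s i ≤ ∑ i ∈ K, M := Finset.sum_le_sum fun i _ => hle i
      rw [h1] at h2
      simpa [mul_comm] using h2
    have hdiv : lam / M ≤ lam * (K.card : ℝ) := by
      rw [div_le_iff₀ hMpos]
      calc lam = lam * 1 := (mul_one lam).symm
        _ ≤ lam * ((K.card : ℝ) * M) := mul_le_mul_of_nonneg_left hcardM hlam
        _ = lam * (K.card : ℝ) * M := by ring
    linarith
  · -- feasible set empty: both A and B are empty
    have hAe : A = ∅ := by
      ext v; simp only [hA, Set.mem_setOf_eq, Set.mem_empty_iff_false, iff_false]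
      rintro ⟨P, hP, -⟩; exact hfe ⟨P, hP⟩
    have hBe : B = ∅ := by
      ext v; simp only [hB, Set.mem_setOf_eq, Set.mem_empty_iff_false, iff_false]
      rintro ⟨P, hP, -⟩; exact hfe ⟨P, hP⟩
    rw [hAe, hBe]
end

section
/- Let p₀ : Fin m → ℝ be a probability vector (nonnegative entries summing to 1) with m ≥ 1 and n ≥ 1, let C : Matrix (Fin m) (Fin n) ℝ, and let λ > 0. Then the infimum over Π ∈ S(p₀) of trace(Cᵀ * Π) + λ / ‖Πᵀ𝟙‖_∞ equals the minimum over i ∈ Fin n of the infimum, over Π ∈ S(p₀) with (Πᵀ𝟙) i > 0, of trace(Cᵀ * Π) + λ / (Πᵀ𝟙) i. -/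
open Matrix

theorem stmt_12 (m n : ℕ) (hm : 1 ≤ m) (hn : 1 ≤ n)
    (p₀ : Fin m → ℝ) (hp₀ : ∀ j, 0 ≤ p₀ j) (hsum : ∑ j, p₀ j = 1)
    (C : Matrix (Fin m) (Fin n) ℝ) (lam : ℝ) (hlam : 0 < lam) :
    sInf {v : ℝ | ∃ P ∈ feasibleSet (n := n) p₀,
        v = Matrix.trace (Cᵀ * P) + lam / (⨆ i : Fin n, |∑ j, P j i|)}
      = ⨅ i : Fin n, sInf {v : ℝ | ∃ P ∈ feasibleSet (n := n) p₀,
          0 < (∑ j, P j i) ∧ v = Matrix.trace (Cᵀ * P) + lam / (∑ j, P j i)} := by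
  have hne : Nonempty (Fin n) := ⟨⟨0, hn⟩⟩
  have hmne : Nonempty (Fin m) := ⟨⟨0, hm⟩⟩
  have hn0 : (0:ℝ) < n := by exact_mod_cast hn
  -- basic facts about feasible matrices
  have col_nonneg : ∀ P ∈ feasibleSet (n := n) p₀, ∀ i, 0 ≤ ∑ j, P j i := by
    intro P hP i
    exact Finset.sum_nonneg fun j _ => hP.1 j i
  have col_total : ∀ P ∈ feasibleSet (n := n) p₀, ∑ i, ∑ j, P j i = 1 := by
    intro P hP
    rw [Finset.sum_comm]
    simp only [hP.2]
    exact hsum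
  have p0_le_one : ∀ j, p₀ j ≤ 1 := by
    intro j
    rw [← hsum]
    exact Finset.single_le_sum (fun k _ => hp₀ k) (Finset.mem_univ j)
  have entry_le_one : ∀ P ∈ feasibleSet (n := n) p₀, ∀ j i, P j i ≤ 1 := by
    intro P hP j i
    calc P j i ≤ ∑ i', P j i' :=
          Finset.single_le_sum (fun k _ => hP.1 j k) (Finset.mem_univ i)
      _ = p₀ j := hP.2 j
      _ ≤ 1 := p0_le_one j
  -- trace formula and lower bound
  have trace_eq : ∀ P : Matrix (Fin m) (Fin n) ℝ,
      Matrix.trace (Cᵀ * P) = ∑ i, ∑ j, C j i * P j i := by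
    intro P
    simp [Matrix.trace, Matrix.mul_apply, Matrix.diag]
  set M : ℝ := ∑ i : Fin n, ∑ j : Fin m, |C j i| with hM
  have trace_lb : ∀ P ∈ feasibleSet (n := n) p₀, -M ≤ Matrix.trace (Cᵀ * P) := by
    intro P hP
    rw [trace_eq, hM, ← Finset.sum_neg_distrib]
    refine Finset.sum_le_sum fun i _ => ?_
    rw [← Finset.sum_neg_distrib]
    refine Finset.sum_le_sum fun j _ => ?_
    have h0 := hP.1 j i
    have h1 := entry_le_one P hP j i
    nlinarith [neg_abs_le (C j i), abs_nonneg (C j i)]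
  -- argmax column
  have sup_eq : ∀ P ∈ feasibleSet (n := n) p₀, ∃ i0 : Fin n,
      (⨆ i : Fin n, |∑ j, P j i|) = ∑ j, P j i0 ∧ 0 < ∑ j, P j i0 ∧
        ∀ i, ∑ j, P j i ≤ ∑ j, P j i0 := by
    intro P hP
    obtain ⟨i0, hi0⟩ := Finite.exists_max (fun i : Fin n => ∑ j, P j i)
    have hpos : 0 < ∑ j, P j i0 := by
      by_contra h
      push_neg at h
      have : ∑ i, ∑ j, P j i ≤ 0 := by
        refine Finset.sum_nonpos fun i _ => le_trans (hi0 i) h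
      rw [col_total P hP] at this; linarith
    refine ⟨i0, ?_, hpos, hi0⟩
    apply le_antisymm
    · refine ciSup_le fun i => ?_
      rw [abs_of_nonneg (col_nonneg P hP i)]
      exact hi0 i
    · have := le_ciSup (f := fun i : Fin n => |∑ j, P j i|)
        (Set.Finite.bddAbove (Set.finite_range _)) i0
      rwa [abs_of_nonneg (col_nonneg P hP i0)] at this
  -- the two kinds of sets
  set B : Set ℝ := {v : ℝ | ∃ P ∈ feasibleSet (n := n) p₀,
      v = Matrix.trace (Cᵀ * P) + lam / (⨆ i : Fin n, |∑ j, P j i|)} with hB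
  set A : Fin n → Set ℝ := fun i => {v : ℝ | ∃ P ∈ feasibleSet (n := n) p₀,
      0 < (∑ j, P j i) ∧ v = Matrix.trace (Cᵀ * P) + lam / (∑ j, P j i)} with hA
  -- lower bounds
  have hBlb : ∀ x ∈ B, -M ≤ x := by
    rintro x ⟨P, hP, rfl⟩
    obtain ⟨i0, hs, hpos, -⟩ := sup_eq P hP
    have : 0 ≤ lam / (⨆ i : Fin n, |∑ j, P j i|) := by
      rw [hs]; positivity
    linarith [trace_lb P hP]
  have hAlb : ∀ i, ∀ x ∈ A i, -M ≤ x := by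
    rintro i x ⟨P, hP, hpos, rfl⟩
    have : 0 ≤ lam / (∑ j, P j i) := by positivity
    linarith [trace_lb P hP]
  have hBbdd : BddBelow B := ⟨-M, hBlb⟩
  have hAbdd : ∀ i, BddBelow (A i) := fun i => ⟨-M, hAlb i⟩
  -- uniform feasible matrix
  set U : Matrix (Fin m) (Fin n) ℝ := fun j _ => p₀ j / n with hU
  have hUfeas : U ∈ feasibleSet (n := n) p₀ := by
    constructor
    · intro j i; exact div_nonneg (hp₀ j) hn0.le
    · intro j
      simp [hU, Finset.sum_const, Finset.card_fin]
      field_simp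
  have hUcol : ∀ i : Fin n, ∑ j, U j i = 1 / n := by
    intro i
    simp only [hU]
    rw [← Finset.sum_div, hsum]
  have hBne : B.Nonempty :=
    ⟨_, U, hUfeas, rfl⟩
  have hAne : ∀ i, (A i).Nonempty := by
    intro i
    exact ⟨_, U, hUfeas, by rw [hUcol i]; positivity, rfl⟩
  apply le_antisymm
  · refine le_ciInf fun i => ?_
    refine le_csInf (hAne i) ?_
    rintro x ⟨P, hP, hpos, rfl⟩
    have hmem : (Matrix.trace (Cᵀ * P) + lam / (⨆ i : Fin n, |∑ j, P j i|)) ∈ B :=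
      ⟨P, hP, rfl⟩
    have hle : sInf B ≤ Matrix.trace (Cᵀ * P) + lam / (⨆ i : Fin n, |∑ j, P j i|) :=
      csInf_le hBbdd hmem
    obtain ⟨i0, hs, hpos0, hmax⟩ := sup_eq P hP
    have hdiv : lam / (⨆ i : Fin n, |∑ j, P j i|) ≤ lam / (∑ j, P j i) := by
      rw [hs]
      exact div_le_div_of_nonneg_left hlam.le hpos (hmax i)
    linarith
  · refine le_csInf hBne ?_
    rintro x ⟨P, hP, rfl⟩
    obtain ⟨i0, hs, hpos0, hmax⟩ := sup_eq P hP
    have hmem : (Matrix.trace (Cᵀ * P) + lam / (⨆ i : Fin n, |∑ j, P j i|)) ∈ A i0 :=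
      ⟨P, hP, hpos0, by rw [hs]⟩
    have h1 : sInf (A i0) ≤ _ := csInf_le (hAbdd i0) hmem
    have h2 : (⨅ i, sInf (A i)) ≤ sInf (A i0) :=
      ciInf_le (Set.Finite.bddBelow (Set.finite_range _)) i0
    linarith
end

section
/- Let p₀ : Fin m → ℝ be nonzero with nonnegative entries, let C : Matrix (Fin m) (Fin n) ℝ, and let λ ≥ 0. Then the infimum over Π ∈ S(p₀) of trace(Cᵀ * Π) + (λ / ‖p₀‖₂) · Σ_{i ∈ Fin n} ‖Π_i‖₂ is less than or equal to the infimum over Π ∈ S(p₀) of trace(Cᵀ * Π) + λ · card(Πᵀ𝟙); i.e., the sum-of-norms relaxation is a lower bound for the cardinality-penalized optimal transport problem. -/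
open Matrix

theorem stmt_15 (m n : ℕ) (p₀ : Fin m → ℝ) (hp₀ : ∀ j, 0 ≤ p₀ j) (hne : p₀ ≠ 0)
    (C : Matrix (Fin m) (Fin n) ℝ) (lam : ℝ) (hlam : 0 ≤ lam) :
    sInf {v : ℝ | ∃ P ∈ feasibleSet (n := n) p₀,
        v = Matrix.trace (Cᵀ * P) +
          (lam / Real.sqrt (∑ j, (p₀ j) ^ 2)) * ∑ i : Fin n, Real.sqrt (∑ j, (P j i) ^ 2)}
      ≤ sInf {v : ℝ | ∃ P ∈ feasibleSet (n := n) p₀,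
          v = Matrix.trace (Cᵀ * P) +
            lam * ((Finset.univ.filter (fun i : Fin n => ∑ j, P j i ≠ 0)).card : ℝ)} := by
  set N : ℝ := Real.sqrt (∑ j, (p₀ j) ^ 2) with hN
  have hsumpos : 0 < ∑ j, (p₀ j) ^ 2 := by
    obtain ⟨j, hj⟩ : ∃ j, p₀ j ≠ 0 := by
      by_contra h; push_neg at h; exact hne (funext h)
    exact Finset.sum_pos' (fun j _ => sq_nonneg _)
      ⟨j, Finset.mem_univ j, by positivity⟩
  have hNpos : 0 < N := Real.sqrt_pos.mpr hsumpos
  -- entrywise bound for feasible P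
  have hentry : ∀ P ∈ feasibleSet (n := n) p₀, ∀ j i, P j i ≤ p₀ j := by
    rintro P ⟨hPnn, hProw⟩ j i
    calc P j i ≤ ∑ i', P j i' :=
          Finset.single_le_sum (fun i' _ => hPnn j i') (Finset.mem_univ i)
      _ = p₀ j := hProw j
  -- key pointwise inequality
  have key : ∀ P ∈ feasibleSet (n := n) p₀,
      Matrix.trace (Cᵀ * P) + (lam / N) * ∑ i : Fin n, Real.sqrt (∑ j, (P j i) ^ 2)
      ≤ Matrix.trace (Cᵀ * P) +
        lam * ((Finset.univ.filter (fun i : Fin n => ∑ j, P j i ≠ 0)).card : ℝ) := by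
    intro P hP
    obtain ⟨hPnn, hProw⟩ := hP
    have hcol : ∀ i, Real.sqrt (∑ j, (P j i) ^ 2) ≤ N := by
      intro i
      apply Real.sqrt_le_sqrt
      exact Finset.sum_le_sum fun j _ =>
        pow_le_pow_left₀ (hPnn j i) (hentry P ⟨hPnn, hProw⟩ j i) 2
    have hzero : ∀ i, ¬ (∑ j, P j i ≠ 0) → Real.sqrt (∑ j, (P j i) ^ 2) = 0 := by
      intro i hi
      push_neg at hi
      have : ∀ j ∈ Finset.univ, P j i = 0 :=
        (Finset.sum_eq_zero_iff_of_nonneg (fun j _ => hPnn j i)).mp hi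
      have : ∑ j, (P j i) ^ 2 = 0 :=
        Finset.sum_eq_zero fun j hj => by rw [this j hj]; ring
      rw [this, Real.sqrt_zero]
    set F := Finset.univ.filter (fun i : Fin n => ∑ j, P j i ≠ 0) with hF
    have hsum : ∑ i : Fin n, Real.sqrt (∑ j, (P j i) ^ 2) ≤ (F.card : ℝ) * N := by
      rw [← Finset.sum_filter_add_sum_filter_not Finset.univ
        (fun i : Fin n => ∑ j, P j i ≠ 0) (fun i => Real.sqrt (∑ j, (P j i) ^ 2))]
      have h2 : ∑ i ∈ Finset.univ.filter (fun i : Fin n => ¬ (∑ j, P j i ≠ 0)),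
          Real.sqrt (∑ j, (P j i) ^ 2) = 0 :=
        Finset.sum_eq_zero fun i hi => hzero i (Finset.mem_filter.mp hi).2
      rw [h2, add_zero]
      calc ∑ i ∈ F, Real.sqrt (∑ j, (P j i) ^ 2) ≤ ∑ _i ∈ F, N :=
            Finset.sum_le_sum fun i _ => hcol i
        _ = (F.card : ℝ) * N := by rw [Finset.sum_const, nsmul_eq_mul]
    have hpen : (lam / N) * ∑ i : Fin n, Real.sqrt (∑ j, (P j i) ^ 2)
        ≤ lam * (F.card : ℝ) := by
      have h1 : (lam / N) * ∑ i : Fin n, Real.sqrt (∑ j, (P j i) ^ 2)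
          ≤ (lam / N) * ((F.card : ℝ) * N) :=
        mul_le_mul_of_nonneg_left hsum (div_nonneg hlam hNpos.le)
      calc (lam / N) * ∑ i : Fin n, Real.sqrt (∑ j, (P j i) ^ 2)
          ≤ (lam / N) * ((F.card : ℝ) * N) := h1
        _ = lam * (F.card : ℝ) := by field_simp
    linarith
  by_cases hFS : (feasibleSet (n := n) p₀).Nonempty
  · obtain ⟨P₀, hP₀⟩ := hFS
    apply le_csInf
    · exact ⟨_, P₀, hP₀, rfl⟩
    rintro b ⟨P, hP, rfl⟩
    refine le_trans (csInf_le ?_ ⟨P, hP, rfl⟩) (key P hP)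
    -- bounded below
    refine ⟨-(∑ j, ∑ i, |C j i| * p₀ j), ?_⟩
    rintro v ⟨Q, hQ, rfl⟩
    obtain ⟨hQnn, hQrow⟩ := hQ
    have htr : Matrix.trace (Cᵀ * Q) = ∑ i, ∑ j, C j i * Q j i := by
      simp [Matrix.trace, Matrix.mul_apply, Matrix.diag, Matrix.transpose_apply]
    have habs : |∑ i, ∑ j, C j i * Q j i| ≤ ∑ i : Fin n, ∑ j, |C j i| * p₀ j := by
      refine (Finset.abs_sum_le_sum_abs _ _).trans (Finset.sum_le_sum fun i _ => ?_)
      refine (Finset.abs_sum_le_sum_abs _ _).trans (Finset.sum_le_sum fun j _ => ?_)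
      rw [abs_mul]
      exact mul_le_mul_of_nonneg_left
        (by rw [abs_of_nonneg (hQnn j i)]; exact hentry Q ⟨hQnn, hQrow⟩ j i)
        (abs_nonneg _)
    have heq : ∑ j, ∑ i, |C j i| * p₀ j = ∑ i : Fin n, ∑ j, |C j i| * p₀ j :=
      Finset.sum_comm
    have htrb : -(∑ j, ∑ i, |C j i| * p₀ j) ≤ Matrix.trace (Cᵀ * Q) := by
      rw [htr, heq]
      linarith [neg_abs_le (∑ i, ∑ j, C j i * Q j i)]
    have hpN : 0 ≤ (lam / N) * ∑ i : Fin n, Real.sqrt (∑ j, (Q j i) ^ 2) := by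
      apply mul_nonneg (div_nonneg hlam hNpos.le)
      exact Finset.sum_nonneg fun i _ => Real.sqrt_nonneg _
    linarith
  · have hA : {v : ℝ | ∃ P ∈ feasibleSet (n := n) p₀,
        v = Matrix.trace (Cᵀ * P) +
          (lam / N) * ∑ i : Fin n, Real.sqrt (∑ j, (P j i) ^ 2)} = ∅ := by
      ext v; simp only [Set.mem_setOf_eq, Set.mem_empty_iff_false, iff_false]
      rintro ⟨P, hP, -⟩; exact hFS ⟨P, hP⟩
    have hB : {v : ℝ | ∃ P ∈ feasibleSet (n := n) p₀,
        v = Matrix.trace (Cᵀ * P) +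
          lam * ((Finset.univ.filter (fun i : Fin n => ∑ j, P j i ≠ 0)).card : ℝ)} = ∅ := by
      ext v; simp only [Set.mem_setOf_eq, Set.mem_empty_iff_false, iff_false]
      rintro ⟨P, hP, -⟩; exact hFS ⟨P, hP⟩
    rw [hA, hB]
end
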